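/- arXiv:1609.02062 — 4 statements merged into one kernel-verified Lean document; each statement's English description precedes it below -/
import Mathlib

section
/- Let X, Y and Z be Banach spaces such that Z is a closed subspace of X which is an ideal in X. Then the natural inclusion of Z ⊗ Y into X ⊗ Y is isometric for the projective tensor norms; that is, for every element u of the algebraic tensor product Z ⊗ Y, the projective norm of u computed in Z ⊗̂π Y equals the projective norm of u computed in X ⊗̂π Y, so Z ⊗̂π Y is (canonically isometric to) a closed subspace of X ⊗̂π Y. -/
open scoped TensorProduct
open MeasureTheory UniformSpace
open scoped ENNReal

noncomputable section

/-- The projective tensor norm on the algebraic tensor product `X ⊗[ℝ] Y`: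
`‖u‖_π = inf { ∑ᵢ ‖xᵢ‖ ‖yᵢ‖ : u = ∑ᵢ xᵢ ⊗ yᵢ }`. -/
def projectiveNorm (X Y : Type*) [NormedAddCommGroup X] [NormedSpace ℝ X]
    [NormedAddCommGroup Y] [NormedSpace ℝ Y] (u : X ⊗[ℝ] Y) : ℝ :=
  sInf { r : ℝ | ∃ (n : ℕ) (x : Fin n → X) (y : Fin n → Y),
    u = ∑ i, x i ⊗ₜ[ℝ] y i ∧ r = ∑ i, ‖x i‖ * ‖y i‖ }


/-- A (closed) subspace `Z` of `X` is an ideal in `X`: for each `ε > 0` and each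
finite-dimensional subspace `E ⊆ X` there is a linear map `T : E → Z ⊆ X` fixing `E ∩ Z`
with `‖T e‖ ≤ (1 + ε) ‖e‖`. -/
def IsIdeal {X : Type*} [NormedAddCommGroup X] [NormedSpace ℝ X] (Z : Submodule ℝ X) : Prop :=
  ∀ ε : ℝ, 0 < ε → ∀ E : Submodule ℝ X, FiniteDimensional ℝ E →
    ∃ T : E →ₗ[ℝ] X, (∀ e : E, T e ∈ Z) ∧ (∀ e : E, (e : X) ∈ Z → T e = e) ∧
      ∀ e : E, ‖T e‖ ≤ (1 + ε) * ‖(e : X)‖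

/-- Every element of an algebraic tensor product has a finite representation. -/
lemma exists_fin_rep {R M N : Type*} [CommRing R] [AddCommGroup M] [Module R M]
    [AddCommGroup N] [Module R N] (u : M ⊗[R] N) :
    ∃ (n : ℕ) (x : Fin n → M) (y : Fin n → N), u = ∑ i, x i ⊗ₜ[R] y i := by
  obtain ⟨s, rfl⟩ := TensorProduct.exists_finset u
  refine ⟨s.card, fun i => (s.equivFin.symm i : M × N).1,
    fun i => (s.equivFin.symm i : M × N).2, ?_⟩
  rw [← Finset.sum_attach s (fun p => p.1 ⊗ₜ[R] p.2)]
  exact Fintype.sum_equiv s.equivFin _ _ (fun p => by simp)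

/-- The set of costs of representations of `u`. -/
def repSet (X Y : Type*) [NormedAddCommGroup X] [NormedSpace ℝ X]
    [NormedAddCommGroup Y] [NormedSpace ℝ Y] (u : X ⊗[ℝ] Y) : Set ℝ :=
  { r : ℝ | ∃ (n : ℕ) (x : Fin n → X) (y : Fin n → Y),
    u = ∑ i, x i ⊗ₜ[ℝ] y i ∧ r = ∑ i, ‖x i‖ * ‖y i‖ }

lemma projectiveNorm_eq (X Y : Type*) [NormedAddCommGroup X] [NormedSpace ℝ X]
    [NormedAddCommGroup Y] [NormedSpace ℝ Y] (u : X ⊗[ℝ] Y) :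
    projectiveNorm X Y u = sInf (repSet X Y u) := rfl

lemma repSet_nonempty (X Y : Type*) [NormedAddCommGroup X] [NormedSpace ℝ X]
    [NormedAddCommGroup Y] [NormedSpace ℝ Y] (u : X ⊗[ℝ] Y) :
    (repSet X Y u).Nonempty := by
  obtain ⟨n, x, y, h⟩ := exists_fin_rep u
  exact ⟨_, n, x, y, h, rfl⟩

lemma repSet_bddBelow (X Y : Type*) [NormedAddCommGroup X] [NormedSpace ℝ X]
    [NormedAddCommGroup Y] [NormedSpace ℝ Y] (u : X ⊗[ℝ] Y) :
    BddBelow (repSet X Y u) := by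
  refine ⟨0, fun r hr => ?_⟩
  obtain ⟨n, x, y, -, rfl⟩ := hr
  exact Finset.sum_nonneg fun i _ => mul_nonneg (norm_nonneg _) (norm_nonneg _)

lemma projectiveNorm_le_sum {X Y : Type*} [NormedAddCommGroup X] [NormedSpace ℝ X]
    [NormedAddCommGroup Y] [NormedSpace ℝ Y] {u : X ⊗[ℝ] Y} {n : ℕ}
    {x : Fin n → X} {y : Fin n → Y} (h : u = ∑ i, x i ⊗ₜ[ℝ] y i) :
    projectiveNorm X Y u ≤ ∑ i, ‖x i‖ * ‖y i‖ :=
  csInf_le (repSet_bddBelow X Y u) ⟨n, x, y, h, rfl⟩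

/-- If `Z` is a closed subspace of a Banach space `X` which is an ideal in `X`, then the natural
inclusion of `Z ⊗ Y` into `X ⊗ Y` is isometric for the projective tensor norms; hence
`Z ⊗̂π Y` is (canonically isometric to) a closed subspace of `X ⊗̂π Y`. -/
theorem projTensor_of_ideal_isometric (X Y : Type*)
    [NormedAddCommGroup X] [NormedSpace ℝ X] [CompleteSpace X]
    [NormedAddCommGroup Y] [NormedSpace ℝ Y] [CompleteSpace Y]
    (Z : Submodule ℝ X) (hZclosed : IsClosed (Z : Set X)) (hZideal : IsIdeal Z)
    (u : ↥Z ⊗[ℝ] Y) :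
    projectiveNorm X Y (TensorProduct.map Z.subtype (LinearMap.id : Y →ₗ[ℝ] Y) u) =
      projectiveNorm (↥Z) Y u := by
  classical
  set v := TensorProduct.map Z.subtype (LinearMap.id : Y →ₗ[ℝ] Y) u with hv
  apply le_antisymm
  · -- easy direction: a representation of `u` gives a representation of `v` of the same cost
    rw [projectiveNorm_eq (↥Z) Y u]
    refine le_csInf (repSet_nonempty _ _ _) fun r hr => ?_
    obtain ⟨n, x, y, h, rfl⟩ := hr
    have hrep : v = ∑ i, ((x i : X)) ⊗ₜ[ℝ] y i := by
      rw [hv, h, map_sum]; simp [TensorProduct.map_tmul]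
    calc projectiveNorm X Y v ≤ ∑ i, ‖(x i : X)‖ * ‖y i‖ := projectiveNorm_le_sum hrep
    _ = ∑ i, ‖x i‖ * ‖y i‖ := by simp
  · -- hard direction
    refine le_of_forall_pos_le_add fun δ hδ => ?_
    have hlt : projectiveNorm X Y v < projectiveNorm X Y v + δ / 2 := by linarith
    rw [projectiveNorm_eq X Y v] at hlt
    obtain ⟨r, hrmem, hr⟩ := exists_lt_of_csInf_lt (repSet_nonempty X Y v) hlt
    obtain ⟨n, x, y, hxy, rfl⟩ := hrmem
    set r : ℝ := ∑ i, ‖x i‖ * ‖y i‖ with hrdef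
    have hr0 : 0 ≤ r := by
      rw [hrdef]
      exact Finset.sum_nonneg fun i _ => mul_nonneg (norm_nonneg _) (norm_nonneg _)
    clear_value r
    obtain ⟨ε, hεpos, hεr⟩ : ∃ ε : ℝ, 0 < ε ∧ ε * r ≤ δ / 2 := by
      refine ⟨δ / (2 * (r + 1)), by positivity, ?_⟩
      rw [div_mul_eq_mul_div, div_le_div_iff₀ (by positivity) two_pos]
      nlinarith
    -- a representation of u
    obtain ⟨m, z, w, hzw⟩ := exists_fin_rep u
    -- the finite-dimensional subspace E
    set E : Submodule ℝ X :=
      Submodule.span ℝ (Set.range x ∪ Set.range (fun j => (z j : X))) with hE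
    have hEfin : FiniteDimensional ℝ E := by
      apply FiniteDimensional.span_of_finite
      exact (Set.finite_range x).union (Set.finite_range _)
    obtain ⟨T, hT1, hT2, hT3⟩ := hZideal ε hεpos E hEfin
    have hxE : ∀ i, x i ∈ E := fun i =>
      Submodule.subset_span (Or.inl (Set.mem_range_self i))
    have hzE : ∀ j, (z j : X) ∈ E := fun j =>
      Submodule.subset_span (Or.inr (Set.mem_range_self j))
    -- the two liftings to E ⊗ Y agree
    have hEk : (∑ i, (⟨x i, hxE i⟩ : E) ⊗ₜ[ℝ] y i)
        = ∑ j, (⟨(z j : X), hzE j⟩ : E) ⊗ₜ[ℝ] w j := by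
      have hinj : Function.Injective (LinearMap.rTensor Y E.subtype) :=
        Module.Flat.rTensor_preserves_injective_linearMap E.subtype E.injective_subtype
      apply hinj
      have h1 : LinearMap.rTensor Y E.subtype (∑ i, (⟨x i, hxE i⟩ : E) ⊗ₜ[ℝ] y i)
          = ∑ i, x i ⊗ₜ[ℝ] y i := by
        rw [map_sum]; simp [LinearMap.rTensor_tmul]
      have h2 : LinearMap.rTensor Y E.subtype (∑ j, (⟨(z j : X), hzE j⟩ : E) ⊗ₜ[ℝ] w j)
          = ∑ j, (z j : X) ⊗ₜ[ℝ] w j := by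
        rw [map_sum]; simp [LinearMap.rTensor_tmul]
      have h3 : v = ∑ j, (z j : X) ⊗ₜ[ℝ] w j := by
        rw [hv, hzw, map_sum]; simp [TensorProduct.map_tmul]
      rw [h1, h2, ← h3, hxy]
    -- the map into Z
    set T' : E →ₗ[ℝ] Z := T.codRestrict Z hT1 with hT'
    set x' : Fin n → Z := fun i => T' ⟨x i, hxE i⟩ with hx'
    -- the new representation of u
    have hrepu : u = ∑ i, x' i ⊗ₜ[ℝ] y i := by
      have hinjZ : Function.Injective
          (TensorProduct.map Z.subtype (LinearMap.id : Y →ₗ[ℝ] Y)) :=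
        Module.Flat.rTensor_preserves_injective_linearMap Z.subtype Z.injective_subtype
      apply hinjZ
      rw [← hv, map_sum]
      have : ∀ i, TensorProduct.map Z.subtype (LinearMap.id : Y →ₗ[ℝ] Y)
          (x' i ⊗ₜ[ℝ] y i) = T ⟨x i, hxE i⟩ ⊗ₜ[ℝ] y i := by
        intro i; simp [hx', hT', TensorProduct.map_tmul]
      rw [Finset.sum_congr rfl fun i _ => this i]
      have key : ∑ i, T ⟨x i, hxE i⟩ ⊗ₜ[ℝ] y i
          = LinearMap.rTensor Y T (∑ i, (⟨x i, hxE i⟩ : E) ⊗ₜ[ℝ] y i) := by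
        rw [map_sum]; simp [LinearMap.rTensor_tmul]
      rw [key, hEk, map_sum]
      have h3 : v = ∑ j, (z j : X) ⊗ₜ[ℝ] w j := by
        rw [hv, hzw, map_sum]; simp [TensorProduct.map_tmul]
      rw [h3]
      refine Finset.sum_congr rfl fun j _ => ?_
      rw [LinearMap.rTensor_tmul, hT2 _ (z j).2]
    -- estimate the cost
    have hcost : projectiveNorm (↥Z) Y u ≤ (1 + ε) * r := by
      calc projectiveNorm (↥Z) Y u ≤ ∑ i, ‖x' i‖ * ‖y i‖ := projectiveNorm_le_sum hrepu
      _ ≤ ∑ i, ((1 + ε) * ‖x i‖) * ‖y i‖ := by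
          refine Finset.sum_le_sum fun i _ => ?_
          refine mul_le_mul_of_nonneg_right ?_ (norm_nonneg _)
          have : ‖x' i‖ = ‖T ⟨x i, hxE i⟩‖ := rfl
          rw [this]
          exact hT3 ⟨x i, hxE i⟩
      _ = (1 + ε) * r := by
          rw [hrdef, Finset.mul_sum]
          exact Finset.sum_congr rfl fun i _ => mul_assoc _ _ _
    calc projectiveNorm (↥Z) Y u ≤ (1 + ε) * r := hcost
    _ = r + ε * r := by ring
    _ ≤ (projectiveNorm X Y v + δ / 2) + δ / 2 := by
        rw [projectiveNorm_eq]; exact add_le_add hr.le hεr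
    _ = projectiveNorm X Y v + δ := by ring
end
end

section
/- The norms of the real Banach spaces c_0 and ℓ_∞ are alternatively octahedral, but neither c_0 nor ℓ_∞ has an octahedral norm. -/
open scoped TensorProduct
open MeasureTheory UniformSpace
open scoped ENNReal

noncomputable section

/-- The norm of `X` is octahedral: for every finite-dimensional subspace `E` of `X` and every
`ε > 0` there exists `y` in the unit sphere such that
`‖x + l • y‖ ≥ (1 - ε)(‖x‖ + |l|)` for every `x ∈ E` and every `l : ℝ`. -/
def OctahedralNorm (X : Type*) [NormedAddCommGroup X] [NormedSpace ℝ X] : Prop :=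
  ∀ (E : Submodule ℝ X), FiniteDimensional ℝ E → ∀ ε : ℝ, 0 < ε →
    ∃ y : X, ‖y‖ = 1 ∧ ∀ x ∈ E, ∀ l : ℝ, (1 - ε) * (‖x‖ + |l|) ≤ ‖x + l • y‖

/-- The norm of `X` is alternatively octahedral: for every finite family of unit vectors and
`ε > 0` there is a unit vector `y` with `max ‖xᵢ + y‖ ‖xᵢ - y‖ > 2 - ε` for all `i`. -/
def AltOctahedralNorm (X : Type*) [NormedAddCommGroup X] [NormedSpace ℝ X] : Prop :=
  ∀ (n : ℕ) (x : Fin n → X), (∀ i, ‖x i‖ = 1) → ∀ ε : ℝ, 0 < ε →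
    ∃ y : X, ‖y‖ = 1 ∧ ∀ i, 2 - ε < max ‖x i + y‖ ‖x i - y‖

/-- The space `c₀` of real sequences vanishing at infinity. -/
abbrev cZero : Type := ZeroAtInftyContinuousMap ℕ ℝ

/-- The space `ℓ∞` of bounded real sequences. -/
abbrev ellInfty : Type := lp (fun _ : ℕ => ℝ) ⊤

/-- The indicator function of a finite set of naturals, as an element of `c₀`. -/
def indCZero (S : Finset ℕ) : cZero :=
  ⟨⟨fun k => if k ∈ S then 1 else 0, continuous_of_discreteTopology⟩, by
    rw [Filter.cocompact_eq_cofinite]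
    apply Filter.Tendsto.congr' _ tendsto_const_nhds
    rw [Filter.eventuallyEq_iff_exists_mem]
    exact ⟨(S : Set ℕ)ᶜ, S.finite_toSet.compl_mem_cofinite, fun k hk => by
      simp [Finset.mem_coe.not.mp hk, hk]⟩⟩

/-- The indicator function of a finite set of naturals, as an element of `ℓ∞`. -/
def indEllInfty (S : Finset ℕ) : ellInfty :=
  ⟨fun k => if k ∈ S then 1 else 0, memℓp_infty ⟨1, by
    rintro r ⟨k, rfl⟩
    simp only [Real.norm_eq_abs]
    split <;> simp⟩⟩

/-- Generic criterion: if a normed space has a coordinate-evaluation system in which the norm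
is the sup of the coordinates and indicator functions of finite sets exist, then the norm is
alternatively octahedral but not octahedral. -/
theorem altOct_not_oct_aux {X : Type*} [NormedAddCommGroup X] [NormedSpace ℝ X]
    (ev : X → ℕ → ℝ) (ind : Finset ℕ → X)
    (hadd : ∀ f g k, ev (f + g) k = ev f k + ev g k)
    (hsmul : ∀ (c : ℝ) (f : X) (k : ℕ), ev (c • f) k = c * ev f k)
    (hle : ∀ (f : X) (k : ℕ), |ev f k| ≤ ‖f‖)
    (hsup : ∀ (f : X) (C : ℝ), 0 ≤ C → (∀ k, |ev f k| ≤ C) → ‖f‖ ≤ C)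
    (hind : ∀ S k, ev (ind S) k = if k ∈ S then 1 else 0) :
    AltOctahedralNorm X ∧ ¬ OctahedralNorm X := by
  have hsub : ∀ (f g : X) (k : ℕ), ev (f - g) k = ev f k - ev g k := by
    intro f g k
    have : f - g = f + (-1 : ℝ) • g := by rw [neg_one_smul]; abel
    rw [this, hadd, hsmul]; ring
  -- norm of the indicator of a nonempty set is `1`
  have hindnorm : ∀ (S : Finset ℕ) (k : ℕ), k ∈ S → ‖ind S‖ = 1 := by
    intro S k hk
    refine le_antisymm (hsup _ 1 zero_le_one fun j => ?_) ?_
    · rw [hind]; split <;> simp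
    · have := hle (ind S) k
      rwa [hind, if_pos hk, abs_one] at this
  constructor
  · -- alternative octahedrality
    intro n x hx ε hε
    set δ : ℝ := min (ε / 2) (1 / 2) with hδ
    have hδpos : 0 < δ := lt_min (by linarith) (by norm_num)
    have hδle : δ ≤ 1 / 2 := min_le_right _ _
    have hδε : δ < ε := lt_of_le_of_lt (min_le_left _ _) (by linarith)
    have hk : ∀ i, ∃ k, 1 - δ < |ev (x i) k| := by
      intro i
      by_contra h
      push_neg at h
      have := hsup (x i) (1 - δ) (by linarith) h
      rw [hx i] at this; linarith
    choose k hk using hk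
    set S : Finset ℕ := insert 0 (Finset.image k Finset.univ) with hS
    refine ⟨ind S, hindnorm S 0 (Finset.mem_insert_self _ _), fun i => ?_⟩
    have hki : ev (ind S) (k i) = 1 := by
      rw [hind, if_pos]
      exact Finset.mem_insert_of_mem (Finset.mem_image_of_mem k (Finset.mem_univ i))
    rcases le_or_gt 0 (ev (x i) (k i)) with ha | ha
    · refine lt_max_of_lt_left ?_
      have h1 : 1 - δ < ev (x i) (k i) := by
        have := hk i; rwa [abs_of_nonneg ha] at this
      have h2 : ev (x i) (k i) + 1 ≤ |ev (x i + ind S) (k i)| := by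
        rw [hadd, hki]
        exact le_abs_self _
      have := le_trans h2 (hle _ _)
      linarith
    · refine lt_max_of_lt_right ?_
      have h1 : ev (x i) (k i) < -(1 - δ) := by
        have := hk i; rw [abs_of_neg ha] at this; linarith
      have h2 : 1 - ev (x i) (k i) ≤ |ev (x i - ind S) (k i)| := by
        rw [hsub, hki]
        rw [abs_sub_comm]
        exact le_abs_self _
      have := le_trans h2 (hle _ _)
      linarith
  · -- the norm is not octahedral
    intro h
    have hE : FiniteDimensional ℝ (Submodule.span ℝ {ind {0}}) :=
      FiniteDimensional.span_of_finite ℝ (Set.finite_singleton _)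
    obtain ⟨y, hy, hP⟩ := h (Submodule.span ℝ {ind {0}}) hE (1/4) (by norm_num)
    set a : ℝ := ev y 0 with ha
    have haabs : |a| ≤ 1 := by rw [← hy]; exact hle y 0
    set s : ℝ := if 0 ≤ a then 1 else -1 with hs
    have hsabs : |s| = 1 := by rw [hs]; split <;> simp
    set e := ind {0} with he
    have hxmem : (-s) • e ∈ Submodule.span ℝ {ind {0}} :=
      Submodule.smul_mem _ _ (Submodule.subset_span rfl)
    have hxnorm : ‖(-s) • e‖ = 1 := by
      rw [norm_smul, Real.norm_eq_abs, abs_neg, hsabs,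
        hindnorm {0} 0 (Finset.mem_singleton_self 0), mul_one]
    have hbound : ‖(-s) • e + (1 : ℝ) • y‖ ≤ 1 := by
      apply hsup _ 1 zero_le_one
      intro j
      rw [hadd, hsmul, hsmul, he, hind, one_mul]
      rcases eq_or_ne j 0 with rfl | hj
      · rw [if_pos (Finset.mem_singleton_self 0), mul_one]
        rw [hs]
        rcases le_or_gt 0 a with h0 | h0
        · rw [if_pos h0]
          rw [abs_le] at haabs ⊢
          constructor <;> linarith [haabs.1, haabs.2]
        · rw [if_neg (not_le.mpr h0)]
          rw [abs_le] at haabs ⊢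
          constructor <;> [linarith [haabs.1]; linarith [haabs.2]]
      · rw [if_neg (by simpa using hj), mul_zero, zero_add]
        exact hy ▸ hle y j
    have := hP ((-s) • e) hxmem 1
    rw [hxnorm] at this
    rw [one_smul, neg_smul] at hbound
    norm_num at this
    linarith

/-- The norms of `c₀` and `ℓ∞` are alternatively octahedral, but neither norm is octahedral. -/
theorem cZero_ellInfty_altOctahedral_not_octahedral :
    AltOctahedralNorm cZero ∧ AltOctahedralNorm ellInfty ∧
      ¬ OctahedralNorm cZero ∧ ¬ OctahedralNorm ellInfty := by
  have hC := altOct_not_oct_aux (fun (f : cZero) k => f k) indCZero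
    (by intro f g k; simp)
    (by intro c f k; simp)
    (by
      intro f k
      rw [← Real.norm_eq_abs, ← ZeroAtInftyContinuousMap.norm_toBCF_eq_norm]
      exact BoundedContinuousFunction.norm_coe_le_norm f.toBCF k)
    (by
      intro f C hC h
      rw [← ZeroAtInftyContinuousMap.norm_toBCF_eq_norm]
      exact (BoundedContinuousFunction.norm_le hC).2 fun k => by
        rw [Real.norm_eq_abs]; exact h k)
    (fun S k => rfl)
  have hL := altOct_not_oct_aux (fun (f : ellInfty) k => f k) indEllInfty
    (by intro f g k; show (f + g) k = f k + g k; rw [lp.coeFn_add]; rfl)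
    (by intro c f k; show (c • f) k = c * f k; rw [lp.coeFn_smul]; rfl)
    (by
      intro f k
      rw [← Real.norm_eq_abs]; exact lp.norm_apply_le_norm ENNReal.top_ne_zero f k)
    (by
      intro f C hC h
      exact lp.norm_le_of_forall_le hC fun k => by rw [Real.norm_eq_abs]; exact h k)
    (fun S k => rfl)
  exact ⟨hC.1, hL.1, hC.2, hL.2⟩
end
end

section
/- Let X and Y be Banach spaces and let H be a closed subspace of L(X*, Y) containing the elementary tensor operators X ⊗ Y (where x ⊗ y denotes the operator f ↦ f(x)y), such that every T ∈ H is weak*-to-weakly continuous. If the norm of X is alternatively octahedral and the norm of Y is octahedral, then the norm of H is octahedral. -/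
open scoped TensorProduct
open MeasureTheory UniformSpace
open scoped ENNReal

noncomputable section

lemma oct_key {Z : Type*} [NormedAddCommGroup Z] [NormedSpace ℝ Z]
    {v y : Z} {δ : ℝ} (hv : ‖v‖ = 1) (hy : ‖y‖ = 1) (h : 2 - δ ≤ ‖v + y‖)
    {μ : ℝ} (hμ : 0 ≤ μ) : (1 - δ) * (1 + μ) ≤ ‖v + μ • y‖ := by
  have hδ0 : 0 ≤ δ := by
    have := norm_add_le v y
    rw [hv, hy] at this
    linarith
  rcases le_total μ 1 with hμ1 | hμ1
  · have hdec : v + y = (v + μ • y) + (1 - μ) • y := by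
      rw [sub_smul, one_smul]; abel
    have htri : ‖v + y‖ ≤ ‖v + μ • y‖ + ‖(1 - μ) • y‖ := by
      rw [hdec]; exact norm_add_le _ _
    rw [norm_smul, hy, Real.norm_eq_abs, abs_of_nonneg (by linarith)] at htri
    nlinarith [mul_nonneg hδ0 hμ]
  · have hdec : μ • (v + y) = (v + μ • y) + (μ - 1) • v := by
      rw [smul_add, sub_smul, one_smul]; abel
    have htri : ‖μ • (v + y)‖ ≤ ‖v + μ • y‖ + ‖(μ - 1) • v‖ := by
      rw [hdec]; exact norm_add_le _ _
    rw [norm_smul, norm_smul, hv, Real.norm_eq_abs, Real.norm_eq_abs,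
      abs_of_nonneg hμ, abs_of_nonneg (by linarith)] at htri
    nlinarith [mul_le_mul_of_nonneg_left h hμ]

lemma simpleOH_to_oct {Z : Type*} [NormedAddCommGroup Z] [NormedSpace ℝ Z]
    (h : ∀ (s : Finset Z), (∀ z ∈ s, ‖z‖ = 1) → ∀ δ : ℝ, 0 < δ →
      ∃ y : Z, ‖y‖ = 1 ∧ ∀ z ∈ s, 2 - δ ≤ ‖z + y‖) : OctahedralNorm Z := by
  intro E hE ε hε
  haveI := hE
  set δ := ε / 2 with hδdef
  have hδ : 0 < δ := by positivity
  obtain ⟨t, hts, htfin, hcover⟩ :=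
    (isCompact_sphere (0 : E) 1).finite_cover_balls hδ
  classical
  set s : Finset Z := htfin.toFinset.image (fun v : E => (v : Z)) with hsdef
  have hsnorm : ∀ z ∈ s, ‖z‖ = 1 := by
    intro z hz
    simp only [hsdef, Finset.mem_image, Set.Finite.mem_toFinset] at hz
    obtain ⟨v, hv, rfl⟩ := hz
    have := hts hv
    rw [mem_sphere_iff_norm, sub_zero] at this
    simpa [Submodule.coe_norm] using this
  obtain ⟨y, hy, hys⟩ := h s hsnorm δ hδ
  refine ⟨y, hy, ?_⟩
  intro x hx l
  by_cases hx0 : x = 0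
  · subst hx0
    have : ‖l • y‖ = |l| := by rw [norm_smul, hy, Real.norm_eq_abs, mul_one]
    rw [zero_add, this, norm_zero, zero_add]
    nlinarith [abs_nonneg l]
  have hxn : 0 < ‖x‖ := norm_pos_iff.2 hx0
  -- the main claim for unit vectors of E
  have claim : ∀ u : Z, u ∈ E → ‖u‖ = 1 → ∀ μ : ℝ, 0 ≤ μ →
      (1 - ε) * (1 + μ) ≤ ‖u + μ • y‖ := by
    intro u hu hun μ hμ
    have husph : (⟨u, hu⟩ : E) ∈ Metric.sphere (0 : E) 1 := by
      rw [mem_sphere_iff_norm, sub_zero]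
      simpa [Submodule.coe_norm] using hun
    obtain ⟨v, hvt, hvu⟩ := Set.mem_iUnion₂.1 (hcover husph)
    have hdist : ‖u - (v : Z)‖ < δ := by
      have := Metric.mem_ball.1 hvu
      rw [dist_eq_norm] at this
      simpa [Submodule.coe_norm] using this
    have hvn : ‖(v : Z)‖ = 1 := by
      have := hts hvt
      rw [mem_sphere_iff_norm, sub_zero] at this
      simpa [Submodule.coe_norm] using this
    have hvs : (v : Z) ∈ s := by
      simp only [hsdef, Finset.mem_image, Set.Finite.mem_toFinset]
      exact ⟨v, hvt, rfl⟩
    have h1 : (1 - δ) * (1 + μ) ≤ ‖(v : Z) + μ • y‖ :=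
      oct_key hvn hy (hys _ hvs) hμ
    have h2 : ‖(v : Z) + μ • y‖ ≤ ‖u + μ • y‖ + ‖u - (v : Z)‖ := by
      have : (v : Z) + μ • y = (u + μ • y) - (u - (v : Z)) := by abel
      rw [this]
      exact norm_sub_le _ _
    have : (1 - δ) * (1 + μ) - δ ≤ ‖u + μ • y‖ := by linarith
    nlinarith
  set c := l / ‖x‖ with hcdef
  have hxc : ‖x‖ * |c| = |l| := by
    rw [hcdef, abs_div, abs_of_pos hxn, mul_div_cancel₀ _ (ne_of_gt hxn)]
  have hfact : x + l • y = ‖x‖ • ((‖x‖⁻¹ • x) + c • y) := by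
    rw [smul_add, smul_inv_smul₀ (ne_of_gt hxn), smul_smul, hcdef,
      mul_div_cancel₀ _ (ne_of_gt hxn)]
  have hun : ‖(‖x‖⁻¹ • x : Z)‖ = 1 := by
    rw [norm_smul, Real.norm_eq_abs, abs_of_pos (inv_pos.2 hxn),
      inv_mul_cancel₀ (ne_of_gt hxn)]
  have humem : (‖x‖⁻¹ • x : Z) ∈ E := E.smul_mem _ hx
  have hmain : (1 - ε) * (1 + |c|) ≤ ‖(‖x‖⁻¹ • x : Z) + c • y‖ := by
    rcases le_or_gt 0 c with hc | hc
    · rw [abs_of_nonneg hc]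
      exact claim _ humem hun c hc
    · have : ‖(‖x‖⁻¹ • x : Z) + c • y‖ = ‖(-(‖x‖⁻¹ • x) : Z) + (-c) • y‖ := by
        rw [← norm_neg]; congr 1; rw [neg_smul]; abel
      rw [this, abs_of_neg hc]
      exact claim _ (E.neg_mem humem) (by rwa [norm_neg]) (-c) (by linarith)
  calc (1 - ε) * (‖x‖ + |l|) = ‖x‖ * ((1 - ε) * (1 + |c|)) := by
        rw [← hxc]; ring
    _ ≤ ‖x‖ * ‖(‖x‖⁻¹ • x : Z) + c • y‖ := by
        exact mul_le_mul_of_nonneg_left hmain (le_of_lt hxn)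
    _ = ‖x + l • y‖ := by
        rw [hfact, norm_smul, Real.norm_eq_abs, abs_of_pos hxn]

/-- An operator of norm `1` almost attains its norm. -/
lemma exists_near_norming {E F : Type*} [NormedAddCommGroup E] [NormedSpace ℝ E]
    [NormedAddCommGroup F] [NormedSpace ℝ F] (T : E →L[ℝ] F) (hT : ‖T‖ = 1)
    {δ : ℝ} (hδ : 0 < δ) (hδ1 : δ < 1) :
    ∃ f : E, ‖f‖ ≤ 1 ∧ 1 - δ < ‖T f‖ := by
  by_contra hcon
  push_neg at hcon
  have : ‖T‖ ≤ 1 - δ := by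
    refine T.opNorm_le_bound (by linarith) ?_
    intro x
    by_cases hx : x = 0
    · simp [hx]
    have hxn : 0 < ‖x‖ := norm_pos_iff.2 hx
    have h1 : ‖(‖x‖⁻¹ • x : E)‖ ≤ 1 := by
      rw [norm_smul, Real.norm_eq_abs, abs_of_pos (inv_pos.2 hxn),
        inv_mul_cancel₀ (ne_of_gt hxn)]
    have := hcon _ h1
    rw [_root_.map_smul, norm_smul, Real.norm_eq_abs, abs_of_pos (inv_pos.2 hxn)] at this
    rw [mul_comm]
    calc ‖T x‖ = ‖x‖ * (‖x‖⁻¹ * ‖T x‖) := by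
          field_simp
      _ ≤ ‖x‖ * (1 - δ) := mul_le_mul_of_nonneg_left this (norm_nonneg x)
  linarith

set_option maxHeartbeats 4000000 in
/-- Let `H` be a closed subspace of `L(X*, Y)` containing the elementary tensors
`x ⊗ y : f ↦ f(x) y` and consisting of weak*-to-weakly continuous operators (equivalently,
operators whose adjoint maps `Y*` into `X`). If the norm of `X` is alternatively octahedral and
the norm of `Y` is octahedral, then the norm of `H` is octahedral. -/
theorem octahedral_of_altOctahedral_octahedral (X Y : Type*)
    [NormedAddCommGroup X] [NormedSpace ℝ X] [CompleteSpace X]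
    [NormedAddCommGroup Y] [NormedSpace ℝ Y] [CompleteSpace Y]
    (H : Submodule ℝ (StrongDual ℝ X →L[ℝ] Y))
    (hHclosed : IsClosed (H : Set (StrongDual ℝ X →L[ℝ] Y)))
    (htensors : ∀ (x : X) (y : Y),
      (NormedSpace.inclusionInDoubleDual ℝ X x).smulRight y ∈ H)
    (hweak : ∀ T ∈ H, ∀ g : StrongDual ℝ Y, ∃ x : X,
      ∀ f : StrongDual ℝ X, g (T f) = f x)
    (hX : AltOctahedralNorm X) (hY : OctahedralNorm Y) :
    @OctahedralNorm ↥H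
      (Submodule.normedAddCommGroup (E := StrongDual ℝ X →L[ℝ] Y) H)
      (Submodule.normedSpace (E := StrongDual ℝ X →L[ℝ] Y) H) := by
  classical
  letI : NormedAddCommGroup ↥H := Submodule.normedAddCommGroup (E := StrongDual ℝ X →L[ℝ] Y) H
  letI : NormedSpace ℝ ↥H := Submodule.normedSpace (E := StrongDual ℝ X →L[ℝ] Y) H
  apply simpleOH_to_oct
  intro s hs ε hε
  set δ : ℝ := min ε 1 / 6 with hδdef
  have hδ : 0 < δ := by positivity
  have hδ1 : δ ≤ 1 / 6 := by
    rw [hδdef]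
    have : min ε 1 ≤ 1 := min_le_right _ _
    linarith
  have hδε : 6 * δ ≤ ε := by
    rw [hδdef]
    have : min ε 1 ≤ ε := min_le_left _ _
    linarith
  set n := s.card with hndef
  set T : Fin n → ↥H := fun i => ((s.equivFin.symm i : {z // z ∈ s}) : ↥H) with hTdef
  have hTmem : ∀ i, (T i : StrongDual ℝ X →L[ℝ] Y) ∈ H := fun i => (T i).2
  have hTnorm : ∀ i, ‖(T i : StrongDual ℝ X →L[ℝ] Y)‖ = 1 := by
    intro i
    have := hs _ (s.equivFin.symm i).2
    exact this
  -- Step 1: for each i, find x'ᵢ ∈ X with ‖x'ᵢ‖ close to 1 and |f x'ᵢ| ≤ ‖Tᵢ f‖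
  have hdata : ∀ i : Fin n, ∃ x' : X, 1 - δ < ‖x'‖ ∧ ‖x'‖ ≤ 1 ∧
      ∀ f : StrongDual ℝ X, ‖f x'‖ ≤ ‖(T i : StrongDual ℝ X →L[ℝ] Y) f‖ := by
    intro i
    obtain ⟨f₀, hf₀, hTf₀⟩ := exists_near_norming _ (hTnorm i) hδ (by linarith)
    have hTf₀0 : (T i : StrongDual ℝ X →L[ℝ] Y) f₀ ≠ 0 := by
      intro hcon
      rw [hcon, norm_zero] at hTf₀
      linarith
    obtain ⟨g, hg, hgval⟩ := exists_dual_vector ℝ _ (norm_ne_zero_iff.2 hTf₀0)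
    obtain ⟨x', hx'⟩ := hweak _ (hTmem i) g
    refine ⟨x', ?_, ?_, ?_⟩
    · have h1 : f₀ x' = ‖(T i : StrongDual ℝ X →L[ℝ] Y) f₀‖ := by
        rw [← hx' f₀]
        exact_mod_cast hgval
      have h2 : ‖f₀ x'‖ ≤ ‖x'‖ := by
        calc ‖f₀ x'‖ ≤ ‖f₀‖ * ‖x'‖ := f₀.le_opNorm x'
          _ ≤ 1 * ‖x'‖ := mul_le_mul_of_nonneg_right hf₀ (norm_nonneg _)
          _ = ‖x'‖ := one_mul _
      have h3 : f₀ x' ≤ ‖f₀ x'‖ := le_abs_self _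
      linarith
    · refine NormedSpace.norm_le_dual_bound ℝ x' zero_le_one ?_
      intro f
      rw [← hx' f]
      calc ‖g ((T i : StrongDual ℝ X →L[ℝ] Y) f)‖
          ≤ ‖g‖ * ‖(T i : StrongDual ℝ X →L[ℝ] Y) f‖ := g.le_opNorm _
        _ ≤ 1 * (1 * ‖f‖) := by
            rw [hg, one_mul, one_mul]
            calc ‖(T i : StrongDual ℝ X →L[ℝ] Y) f‖
                ≤ ‖(T i : StrongDual ℝ X →L[ℝ] Y)‖ * ‖f‖ := ContinuousLinearMap.le_opNorm _ _
              _ = 1 * ‖f‖ := by rw [hTnorm i]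
        _ = 1 * ‖f‖ := by ring
    · intro f
      rw [← hx' f]
      calc ‖g ((T i : StrongDual ℝ X →L[ℝ] Y) f)‖
          ≤ ‖g‖ * ‖(T i : StrongDual ℝ X →L[ℝ] Y) f‖ := g.le_opNorm _
        _ = ‖(T i : StrongDual ℝ X →L[ℝ] Y) f‖ := by rw [hg, one_mul]
  choose x' hx'lt hx'le hx'dual using hdata
  have hx'0 : ∀ i, x' i ≠ 0 := by
    intro i hcon
    have := hx'lt i
    rw [hcon, norm_zero] at this
    linarith
  set xs : Fin n → X := fun i => ‖x' i‖⁻¹ • x' i with hxsdef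
  have hxsn : ∀ i, ‖xs i‖ = 1 := by
    intro i
    rw [hxsdef]
    simp only []
    rw [norm_smul, Real.norm_eq_abs, abs_of_pos (inv_pos.2 (norm_pos_iff.2 (hx'0 i))),
      inv_mul_cancel₀ (norm_ne_zero_iff.2 (hx'0 i))]
  -- Step 2: alternative octahedrality of X
  obtain ⟨x, hxn, hxmax⟩ := hX n xs hxsn δ hδ
  -- Step 3: norming functionals
  have hfs : ∀ i : Fin n, ∃ f : StrongDual ℝ X, ‖f‖ = 1 ∧
      1 - δ < f (xs i) ∧ 1 - δ < ‖f x‖ := by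
    intro i
    have hcases := hxmax i
    have key : ∀ σ : ℝ, σ = 1 ∨ σ = -1 → 2 - δ < ‖xs i + σ • x‖ →
        ∃ f : StrongDual ℝ X, ‖f‖ = 1 ∧ 1 - δ < f (xs i) ∧ 1 - δ < ‖f x‖ := by
      intro σ hσ hbig
      have hz0 : xs i + σ • x ≠ 0 := by
        intro hcon
        rw [hcon, norm_zero] at hbig
        linarith
      obtain ⟨f, hf, hfval⟩ := exists_dual_vector ℝ _ (norm_ne_zero_iff.2 hz0)
      have hfval' : f (xs i) + σ * f x = ‖xs i + σ • x‖ := by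
        have h0 : f (xs i + σ • x) = ‖xs i + σ • x‖ := by exact_mod_cast hfval
        have h0' : f (σ • x) = σ * f x := by rw [_root_.map_smul, smul_eq_mul]
        rw [← h0, _root_.map_add, h0']
      have h2 : |f (xs i)| ≤ 1 := by
        have h := f.le_opNorm (xs i)
        rw [hf, hxsn i, one_mul, Real.norm_eq_abs] at h
        exact h
      have h3 : |f x| ≤ 1 := by
        have h := f.le_opNorm x
        rw [hf, hxn, one_mul, Real.norm_eq_abs] at h
        exact h
      have h4 : σ * f x ≤ |f x| := by
        rcases hσ with h | h
        · rw [h, one_mul]; exact le_abs_self _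
        · rw [h, neg_one_mul]; exact neg_le_abs _
      have h5 : f (xs i) ≤ |f (xs i)| := le_abs_self _
      refine ⟨f, hf, by linarith, ?_⟩
      rw [Real.norm_eq_abs]
      linarith
    rcases max_cases ‖xs i + x‖ ‖xs i - x‖ with ⟨heq, _⟩ | ⟨heq, _⟩
    · refine key 1 (Or.inl rfl) ?_
      rw [one_smul]
      rw [heq] at hcases
      exact hcases
    · refine key (-1) (Or.inr rfl) ?_
      rw [neg_smul, one_smul, ← sub_eq_add_neg]
      rw [heq] at hcases
      exact hcases
  choose f hf1 hf2 hf3 using hfs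
  -- Step 4: octahedrality of Y on the span of the Tᵢ fᵢ
  set E' : Submodule ℝ Y :=
    Submodule.span ℝ (Set.range (fun i => (T i : StrongDual ℝ X →L[ℝ] Y) (f i))) with hE'def
  have hE'fd : FiniteDimensional ℝ E' :=
    FiniteDimensional.span_of_finite ℝ (Set.finite_range _)
  obtain ⟨y, hyn, hyoct⟩ := hY E' hE'fd δ hδ
  -- Step 5: the tensor x ⊗ y
  set W : ↥H := ⟨(NormedSpace.inclusionInDoubleDual ℝ X x).smulRight y, htensors x y⟩ with hWdef
  have hιx : ‖NormedSpace.inclusionInDoubleDual ℝ X x‖ = ‖x‖ :=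
    (NormedSpace.inclusionInDoubleDualLi ℝ (E := X)).norm_map x
  have hWnorm : ‖W‖ = 1 := by
    show ‖(NormedSpace.inclusionInDoubleDual ℝ X x).smulRight y‖ = 1
    rw [ContinuousLinearMap.norm_smulRight_apply, hιx, hxn, hyn, mul_one]
  refine ⟨W, hWnorm, ?_⟩
  intro z hz
  set i := s.equivFin ⟨z, hz⟩ with hidef
  have hzi : T i = z := by
    simp only [hTdef, hidef, Equiv.symm_apply_apply]
  rw [← hzi]
  -- now estimate ‖T i + W‖
  have hfx : 1 - δ < |f i x| := by
    have := hf3 i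
    rwa [Real.norm_eq_abs] at this
  have hTif : (1 - δ) * (1 - δ) ≤ ‖(T i : StrongDual ℝ X →L[ℝ] Y) (f i)‖ := by
    have h1 : ‖(f i) (x' i)‖ ≤ ‖(T i : StrongDual ℝ X →L[ℝ] Y) (f i)‖ := hx'dual i (f i)
    have h2 : (f i) (x' i) = ‖x' i‖ * (f i) (xs i) := by
      have : x' i = ‖x' i‖ • xs i := by
        rw [hxsdef]
        simp only []
        rw [smul_smul, mul_inv_cancel₀ (norm_ne_zero_iff.2 (hx'0 i)), one_smul]
      conv_lhs => rw [this]
      simp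
    have h3 : (1 - δ) * (1 - δ) ≤ (f i) (x' i) := by
      rw [h2]
      have ha : (0:ℝ) < 1 - δ := by linarith
      have := hf2 i
      have := hx'lt i
      nlinarith [norm_nonneg (x' i)]
    calc (1 - δ) * (1 - δ) ≤ (f i) (x' i) := h3
      _ ≤ ‖(f i) (x' i)‖ := le_abs_self _
      _ ≤ _ := h1
  have hoct : (1 - δ) * (‖(T i : StrongDual ℝ X →L[ℝ] Y) (f i)‖ + |f i x|) ≤
      ‖(T i : StrongDual ℝ X →L[ℝ] Y) (f i) + (f i x) • y‖ := by
    refine hyoct _ ?_ (f i x)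
    exact Submodule.subset_span (Set.mem_range_self i)
  have happly : ((T i : StrongDual ℝ X →L[ℝ] Y) + (W : StrongDual ℝ X →L[ℝ] Y)) (f i) =
      (T i : StrongDual ℝ X →L[ℝ] Y) (f i) + (f i x) • y := by
    rw [ContinuousLinearMap.add_apply]
    congr 1
  have hle : ‖(T i : StrongDual ℝ X →L[ℝ] Y) (f i) + (f i x) • y‖ ≤
      ‖(T i : StrongDual ℝ X →L[ℝ] Y) + (W : StrongDual ℝ X →L[ℝ] Y)‖ := by
    rw [← happly]
    exact ContinuousLinearMap.unit_le_opNorm _ _ (le_of_eq (hf1 i))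
  have hnormeq : ‖T i + W‖ =
      ‖(T i : StrongDual ℝ X →L[ℝ] Y) + (W : StrongDual ℝ X →L[ℝ] Y)‖ := by
    rfl
  rw [hnormeq]
  have hδ' : (0:ℝ) < 1 - δ := by linarith
  calc 2 - ε ≤ (1 - δ) * ((1 - δ) * (1 - δ) + (1 - δ)) := by nlinarith [sq_nonneg δ, mul_pos hδ hδ]
    _ ≤ (1 - δ) * (‖(T i : StrongDual ℝ X →L[ℝ] Y) (f i)‖ + |f i x|) :=
        mul_le_mul_of_nonneg_left (add_le_add hTif hfx.le) hδ'.le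
    _ ≤ _ := le_trans hoct hle
end
end

section
/- Let X be a Banach space and Z a closed subspace of X that is an almost isometric ideal in X. If for every finite collection z_1, …, z_n ∈ S_Z there exists v ∈ S_X such that ‖z_i + v‖ = ‖z_i‖ + ‖v‖ for all i ∈ {1, …, n}, then the norm of Z is octahedral. -/
set_option maxHeartbeats 1000000


open scoped TensorProduct
open MeasureTheory UniformSpace
open scoped ENNReal

noncomputable section

lemma aux_numeric (a b m δ ε : ℝ) (ha : 0 ≤ a) (hb : 0 ≤ b) (hδ0 : 0 < δ)
    (hδh : δ ≤ 1/2) (hδε : 3 * δ ≤ ε) (hm0 : 0 < m) (hm : 1 ≤ m * (1 + δ)) :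
    (1 - ε) * (a + b) ≤ (1 - δ) * ((1 - δ) * (a + b * m)) := by
  have h1 : (1 - ε) * a ≤ (1 - δ)^2 * a := by
    have : 1 - ε ≤ (1 - δ)^2 := by nlinarith
    exact mul_le_mul_of_nonneg_right this ha
  have h2 : (1 - ε) * b ≤ (1 - δ)^2 * (b * m) := by
    rcases le_or_gt (1 - 3*δ) 0 with hc | hc
    · have : (1 - ε) * b ≤ 0 := mul_nonpos_of_nonpos_of_nonneg (by linarith) hb
      nlinarith [mul_nonneg hb hm0.le, sq_nonneg (1 - δ)]
    · have e1 : (1 - 3*δ) ≤ (1 - 3*δ) * (m * (1 + δ)) := by nlinarith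
      have e2 : (1 - 3*δ) * (m * (1 + δ)) ≤ (1 - δ)^2 * m := by
        nlinarith [mul_nonneg hm0.le (sq_nonneg δ)]
      have e3 : (1 - ε) ≤ (1 - δ)^2 * m := by linarith
      nlinarith
  nlinarith

lemma aux_lower {X : Type*} [NormedAddCommGroup X] [NormedSpace ℝ X]
    (a v : X) (ha : ‖a‖ = 1) (hv : ‖v‖ = 1) (hav : ‖a + v‖ = 2)
    (l : ℝ) (hl : 0 ≤ l) : 1 + l ≤ ‖a + l • v‖ := by
  rcases le_total l 1 with h1 | h1
  · have heq : a + l • v = (a + v) - (1 - l) • v := by module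
    have hb := norm_sub_norm_le (a + v) ((1 - l) • v)
    rw [norm_smul, Real.norm_eq_abs, abs_of_nonneg (by linarith)] at hb
    rw [heq]; rw [hav, hv] at hb; linarith
  · have heq : a + l • v = l • (a + v) - (l - 1) • a := by module
    have hb := norm_sub_norm_le (l • (a + v)) ((l - 1) • a)
    rw [norm_smul, norm_smul, Real.norm_eq_abs, Real.norm_eq_abs,
      abs_of_nonneg (by linarith : (0:ℝ) ≤ l),
      abs_of_nonneg (by linarith : (0:ℝ) ≤ l - 1), hav, ha] at hb
    rw [heq]; linarith

/-- A (closed) subspace `Z` of `X` is an almost isometric ideal in `X`: for each `ε > 0` and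
each finite-dimensional subspace `E ⊆ X` there is a linear map `T : E → Z ⊆ X` fixing `E ∩ Z`
with `(1 - ε) ‖e‖ ≤ ‖T e‖ ≤ (1 + ε) ‖e‖`. -/
def IsAiIdeal {X : Type*} [NormedAddCommGroup X] [NormedSpace ℝ X] (Z : Submodule ℝ X) : Prop :=
  ∀ ε : ℝ, 0 < ε → ∀ E : Submodule ℝ X, FiniteDimensional ℝ E →
    ∃ T : E →ₗ[ℝ] X, (∀ e : E, T e ∈ Z) ∧ (∀ e : E, (e : X) ∈ Z → T e = e) ∧
      ∀ e : E, (1 - ε) * ‖(e : X)‖ ≤ ‖T e‖ ∧ ‖T e‖ ≤ (1 + ε) * ‖(e : X)‖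

/-- Let `Z` be a closed subspace of `X` which is an almost isometric ideal in `X`. If for every
finite collection `z₁, …, zₙ` of unit vectors of `Z` there exists a unit vector `v ∈ X` with
`‖zᵢ + v‖ = ‖zᵢ‖ + ‖v‖` for all `i`, then the norm of `Z` is octahedral. -/
theorem octahedral_of_aiIdeal (X : Type*) [NormedAddCommGroup X] [NormedSpace ℝ X]
    [CompleteSpace X] (Z : Submodule ℝ X) (hZclosed : IsClosed (Z : Set X))
    (hZai : IsAiIdeal Z)
    (h : ∀ (n : ℕ) (z : Fin n → Z), (∀ i, ‖z i‖ = 1) →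
      ∃ v : X, ‖v‖ = 1 ∧ ∀ i, ‖(z i : X) + v‖ = ‖(z i : X)‖ + ‖v‖) :
    OctahedralNorm ↥Z := by
  intro E hE ε hε
  set δ : ℝ := min (ε/3) (1/2) with hδdef
  have hδ0 : 0 < δ := lt_min (by linarith) one_half_pos
  have hδhalf : δ ≤ 1/2 := min_le_right _ _
  have hδε : 3 * δ ≤ ε := by
    have := min_le_left (ε/3) (1/2); linarith
  haveI := hE
  -- finite δ-net of the unit sphere of E
  have hcomp : IsCompact (Metric.sphere (0 : ↥E) 1) := isCompact_sphere 0 1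
  obtain ⟨t, hts, htf, htcover⟩ := hcomp.finite_cover_balls hδ0
  set s : Finset ↥E := htf.toFinset with hsdef
  set z : Fin s.card → ↥Z := fun i => ((s.equivFin.symm i : ↥E) : ↥Z) with hzdef
  have hz1 : ∀ i, ‖z i‖ = 1 := by
    intro i
    have hmem : (s.equivFin.symm i : ↥E) ∈ t :=
      htf.mem_toFinset.1 (s.equivFin.symm i).2
    have : ‖(s.equivFin.symm i : ↥E)‖ = 1 := by
      have := hts hmem
      simpa [mem_sphere_iff_norm] using this
    simpa [hzdef] using this
  obtain ⟨v, hv1, hv2⟩ := h s.card z hz1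
  -- key: lower bound on the sphere
  have key : ∀ u : ↥E, ‖u‖ = 1 → ∀ l : ℝ, 0 ≤ l →
      1 + l - δ ≤ ‖((u : ↥Z) : X) + l • v‖ := by
    intro u hu l hl
    have humem : u ∈ Metric.sphere (0 : ↥E) 1 := by simpa [mem_sphere_iff_norm] using hu
    obtain ⟨a, hat, hab⟩ := Set.mem_iUnion₂.1 (htcover humem)
    have has : a ∈ s := by rwa [hsdef, Set.Finite.mem_toFinset]
    set i := s.equivFin ⟨a, has⟩ with hidef
    have hzi : z i = ((a : ↥Z)) := by simp [hzdef, hidef]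
    have hnzi : ‖(z i : X)‖ = 1 := by
      rw [show ‖(z i : X)‖ = ‖z i‖ from rfl, hz1 i]
    have hsum : ‖(z i : X) + v‖ = 2 := by
      rw [hv2 i, hnzi, hv1]; norm_num
    have hmain := aux_lower ((z i : X)) v hnzi hv1 hsum l hl
    have hdist : ‖((u : ↥Z) : X) - (z i : X)‖ < δ := by
      rw [hzi]
      have : ‖u - a‖ < δ := by simpa [dist_eq_norm] using hab
      simpa using this
    have htr := norm_sub_norm_le ((z i : X) + l • v) ((z i : X) - ((u : ↥Z) : X))
    have heq2 : (z i : X) + l • v - ((z i : X) - ((u : ↥Z) : X)) = ((u : ↥Z) : X) + l • v := by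
      abel
    rw [heq2] at htr
    have : ‖(z i : X) - ((u : ↥Z) : X)‖ < δ := by
      rw [← norm_neg]; simpa [neg_sub] using hdist
    linarith
  -- scaled version, for all x ∈ E and all real l
  have key2 : ∀ x : ↥Z, x ∈ E → ∀ l : ℝ, (1 - δ) * (‖x‖ + |l|) ≤ ‖(x : X) + l • v‖ := by
    intro x hx l
    by_cases hx0 : x = 0
    · subst hx0
      simp only [Submodule.coe_zero, norm_zero, zero_add, norm_smul, Real.norm_eq_abs, hv1,
        mul_one]
      nlinarith [abs_nonneg l]
    · set r : ℝ := ‖x‖ with hrdef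
      have hr0 : 0 < r := norm_pos_iff.2 hx0
      rcases le_or_gt 0 l with hl | hl
      · set u : ↥E := r⁻¹ • ⟨x, hx⟩ with hudef
        have hu1 : ‖u‖ = 1 := by
          have h1 : ‖u‖ = ‖((u : ↥E) : ↥Z)‖ := rfl
          rw [h1, hudef, Submodule.coe_smul, norm_smul, Real.norm_eq_abs,
            abs_of_pos (inv_pos.2 hr0)]
          show r⁻¹ * ‖x‖ = 1
          field_simp
          exact rfl
        have hk := key u hu1 (l / r) (div_nonneg hl hr0.le)
        have hcoe : ((u : ↥Z) : X) = r⁻¹ • (x : X) := by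
          simp [hudef]
        rw [hcoe] at hk
        have hscale : ‖r⁻¹ • (x : X) + (l / r) • v‖ = r⁻¹ * ‖(x : X) + l • v‖ := by
          rw [← norm_smul_of_nonneg (inv_pos.2 hr0).le]
          congr 1
          rw [smul_add, smul_smul, div_eq_inv_mul]
        rw [hscale] at hk
        have : r + l - δ * r ≤ ‖(x : X) + l • v‖ := by
          have h2 : r * (1 + l / r - δ) ≤ r * (r⁻¹ * ‖(x : X) + l • v‖) :=
            mul_le_mul_of_nonneg_left hk hr0.le
          rw [← mul_assoc, mul_inv_cancel₀ hr0.ne', one_mul] at h2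
          have : r * (1 + l / r - δ) = r + l - δ * r := by field_simp
          linarith [this ▸ h2]
        have habs : |l| = l := abs_of_nonneg hl
        have hxnorm : ‖(x : X)‖ = r := rfl
        nlinarith [abs_nonneg l, hδ0.le]
      · set u : ↥E := -(r⁻¹ • ⟨x, hx⟩) with hudef
        have hu1 : ‖u‖ = 1 := by
          have h1 : ‖u‖ = ‖((u : ↥E) : ↥Z)‖ := rfl
          rw [h1, hudef, Submodule.coe_neg, Submodule.coe_smul, norm_neg, norm_smul,
            Real.norm_eq_abs, abs_of_pos (inv_pos.2 hr0)]
          show r⁻¹ * ‖x‖ = 1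
          field_simp
          exact rfl
        have hk := key u hu1 (-l / r) (div_nonneg (by linarith) hr0.le)
        have hcoe : ((u : ↥Z) : X) = -(r⁻¹ • (x : X)) := by
          simp [hudef]
        rw [hcoe] at hk
        have hscale : ‖-(r⁻¹ • (x : X)) + (-l / r) • v‖ = r⁻¹ * ‖(x : X) + l • v‖ := by
          rw [← norm_neg, ← norm_smul_of_nonneg (inv_pos.2 hr0).le]
          congr 1
          rw [smul_add, smul_smul, div_eq_inv_mul]
          module
        rw [hscale] at hk
        have : r + (-l) - δ * r ≤ ‖(x : X) + l • v‖ := by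
          have h2 : r * (1 + (-l) / r - δ) ≤ r * (r⁻¹ * ‖(x : X) + l • v‖) := by
            have : (-l) / r = -l / r := by ring
            rw [this]
            exact mul_le_mul_of_nonneg_left hk hr0.le
          rw [← mul_assoc, mul_inv_cancel₀ hr0.ne', one_mul] at h2
          have : r * (1 + (-l) / r - δ) = r + (-l) - δ * r := by field_simp
          linarith [this ▸ h2]
        have habs : |l| = -l := abs_of_neg hl
        have hxnorm : ‖(x : X)‖ = r := rfl
        nlinarith [abs_nonneg l, hδ0.le]
  -- apply the ai-ideal property
  set F : Submodule ℝ X := (E.map Z.subtype) ⊔ (ℝ ∙ v) with hFdef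
  haveI hFfd : FiniteDimensional ℝ F := by
    haveI : FiniteDimensional ℝ (E.map Z.subtype) := Module.Finite.map E Z.subtype
    infer_instance
  obtain ⟨T, hTZ, hTfix, hTnorm⟩ := hZai δ hδ0 F hFfd
  have hvF : v ∈ F := Submodule.mem_sup_right (Submodule.mem_span_singleton_self v)
  set vF : F := ⟨v, hvF⟩ with hvFdef
  set w : X := T vF with hwdef
  have hwZ : w ∈ Z := hTZ vF
  have hvFnorm : ‖(vF : X)‖ = 1 := hv1
  have hw_lb : 1 - δ ≤ ‖w‖ := by
    have := (hTnorm vF).1; rw [hvFnorm, mul_one] at this; exact this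
  have hw_ub : ‖w‖ ≤ 1 + δ := by
    have := (hTnorm vF).2; rw [hvFnorm, mul_one] at this; exact this
  have hw0 : 0 < ‖w‖ := by linarith
  set y : ↥Z := ‖w‖⁻¹ • (⟨w, hwZ⟩ : ↥Z) with hydef
  have hy1 : ‖y‖ = 1 := by
    have h1 : ‖y‖ = ‖((y : ↥Z) : X)‖ := rfl
    rw [h1, hydef, Submodule.coe_smul, norm_smul, Real.norm_eq_abs,
      abs_of_pos (inv_pos.2 hw0)]
    show ‖w‖⁻¹ * ‖w‖ = 1
    field_simp
  refine ⟨y, hy1, ?_⟩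
  intro x hx l
  have hxF : (x : X) ∈ F := Submodule.mem_sup_left (Submodule.mem_map_of_mem hx)
  set xF : F := ⟨(x : X), hxF⟩ with hxFdef
  have hTx : T xF = (x : X) := hTfix xF x.2
  set c : ℝ := l * ‖w‖⁻¹ with hcdef
  set u : F := xF + c • vF with hudef
  have hucoe : (u : X) = (x : X) + c • v := rfl
  have hycoe : ((y : ↥Z) : X) = ‖w‖⁻¹ • w := rfl
  have hTu : T u = (x : X) + l • ((y : ↥Z) : X) := by
    rw [hudef, map_add, _root_.map_smul, hTx, hycoe, ← hwdef, smul_smul, hcdef]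
  have hbound := (hTnorm u).1
  rw [hucoe] at hbound
  have hkey := key2 x hx c
  have hgoal_norm : ‖x + l • y‖ = ‖T u‖ := by
    rw [hTu]
    rfl
  rw [hgoal_norm]
  have hcabs : |c| = |l| * ‖w‖⁻¹ := by
    rw [hcdef, abs_mul, abs_of_pos (inv_pos.2 hw0)]
  have hm : 1 ≤ ‖w‖⁻¹ * (1 + δ) := by
    have h1 : ‖w‖⁻¹ * ‖w‖ = 1 := inv_mul_cancel₀ hw0.ne'
    nlinarith [inv_pos.2 hw0]
  rw [hcabs] at hkey
  have hδ1 : δ < 1 := by linarith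
  have hchain : (1 - δ) * ((1 - δ) * (‖x‖ + |l| * ‖w‖⁻¹)) ≤ ‖T u‖ := by
    calc (1 - δ) * ((1 - δ) * (‖x‖ + |l| * ‖w‖⁻¹)) ≤ (1 - δ) * ‖(x : X) + c • v‖ := by
          exact mul_le_mul_of_nonneg_left hkey (by linarith)
        _ ≤ ‖T u‖ := hbound
  have hfinal : (1 - ε) * (‖x‖ + |l|) ≤ (1 - δ) * ((1 - δ) * (‖x‖ + |l| * ‖w‖⁻¹)) :=
    aux_numeric ‖x‖ |l| ‖w‖⁻¹ δ ε (norm_nonneg x) (abs_nonneg l) hδ0 hδhalf hδε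
      (inv_pos.2 hw0) hm
  linarith
end
end
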